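/- The discrete heat kernel G(t,n) := e^{-2t}·I_n(2t) satisfies, for n ∈ ℕ₀ and t ≥ 0, the series representation G(t,n) = (t^n·4^n/√π)·e^{-4t}·Σ_{k=0}^∞ ((4t)^k/k!)·Γ(n+1/2+k)/Γ(2n+1+k). -/

import Mathlib

/-- The modified Bessel function of the first kind of integer order:
`I_n(t) = Σ_{m=0}^∞ (t/2)^{2m+|n|} / (m! (m+|n|)!)`, with `I_{-n} = I_n`. -/
noncomputable def besselI (n : ℤ) (t : ℝ) : ℝ :=
  ∑' m : ℕ, (t / 2) ^ (2 * m + n.natAbs) / (m.factorial * (m + n.natAbs).factorial)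

/-- The discrete heat kernel on `ℤ`: `G(t,n) = e^{-2t} I_n(2t)`. -/
noncomputable def heatKernel (t : ℝ) (n : ℤ) : ℝ := Real.exp (-(2 * t)) * besselI n (2 * t)

namespace HKaux

open Finset

/-- The coefficient appearing in the Cauchy product of `e^{2t}` with the Bessel series. -/
noncomputable def f (n k m : ℕ) : ℝ :=
  if 2 * m ≤ k then
    2 ^ (k - 2 * m) / ((k - 2 * m).factorial * m.factorial * (m + n).factorial)
  else 0

lemma f_of_le {n k m : ℕ} (h : 2 * m ≤ k) :
    f n k m = 2 ^ (k - 2 * m) / ((k - 2 * m).factorial * m.factorial * (m + n).factorial) :=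
  if_pos h

lemma f_of_gt {n k m : ℕ} (h : k < 2 * m) : f n k m = 0 := if_neg (by omega)

/-- Termwise certificate identity, `m ≥ 1` case (stated with `m+1`). -/
lemma cert_succ (n k m : ℕ) :
    ((k : ℝ) + 2) * (2 * n + k + 2) * f n (k + 2) (m + 1)
      - 2 * (2 * n + 2 * k + 3) * f n (k + 1) (m + 1)
      = -4 * f n k (m + 1) + 4 * f n k m := by
  rcases le_or_gt (2 * m + 2) k with h1 | h1
  · -- all four terms present
    obtain ⟨j, rfl⟩ : ∃ j, k = 2 * m + 2 + j := ⟨k - (2 * m + 2), by omega⟩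
    rw [f_of_le (by omega), f_of_le (by omega), f_of_le (by omega), f_of_le (by omega)]
    have e1 : 2 * m + 2 + j + 2 - 2 * (m + 1) = j + 2 := by omega
    have e2 : 2 * m + 2 + j + 1 - 2 * (m + 1) = j + 1 := by omega
    have e3 : 2 * m + 2 + j - 2 * (m + 1) = j := by omega
    have e4 : 2 * m + 2 + j - 2 * m = j + 2 := by omega
    rw [e1, e2, e3, e4]
    have hj : (0:ℝ) < (j.factorial : ℝ) := by exact_mod_cast j.factorial_pos
    have hm : (0:ℝ) < (m.factorial : ℝ) := by exact_mod_cast m.factorial_pos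
    have hmn : (0:ℝ) < ((m + n).factorial : ℝ) := by exact_mod_cast (m + n).factorial_pos
    have F1 : ((j + 2).factorial : ℝ) = ((j:ℝ) + 2) * ((j:ℝ) + 1) * j.factorial := by
      rw [Nat.factorial_succ, Nat.factorial_succ]; push_cast; ring
    have F2 : ((j + 1).factorial : ℝ) = ((j:ℝ) + 1) * j.factorial := by
      rw [Nat.factorial_succ]; push_cast; ring
    have F3 : ((m + 1).factorial : ℝ) = ((m:ℝ) + 1) * m.factorial := by
      rw [Nat.factorial_succ]; push_cast; ring
    have F4 : ((m + 1 + n).factorial : ℝ) = ((m:ℝ) + n + 1) * (m + n).factorial := by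
      have : m + 1 + n = (m + n) + 1 := by omega
      rw [this, Nat.factorial_succ]; push_cast; ring
    rw [F1, F2, F3, F4]
    have P : (2:ℝ) ^ (j + 2) = 4 * 2 ^ j := by rw [pow_add]; ring
    have P1 : (2:ℝ) ^ (j + 1) = 2 * 2 ^ j := by rw [pow_add]; ring
    rw [P, P1]
    field_simp
    push_cast
    ring
  · rcases le_or_gt (2 * m + 1) k with h2 | h2
    · -- k = 2m + 1
      have hk : k = 2 * m + 1 := by omega
      subst hk
      rw [f_of_le (by omega), f_of_le (by omega), f_of_gt (by omega), f_of_le (by omega)]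
      have e1 : 2 * m + 1 + 2 - 2 * (m + 1) = 1 := by omega
      have e2 : 2 * m + 1 + 1 - 2 * (m + 1) = 0 := by omega
      have e4 : 2 * m + 1 - 2 * m = 1 := by omega
      rw [e1, e2, e4]
      have F3 : ((m + 1).factorial : ℝ) = ((m:ℝ) + 1) * m.factorial := by
        rw [Nat.factorial_succ]; push_cast; ring
      have F4 : ((m + 1 + n).factorial : ℝ) = ((m:ℝ) + n + 1) * (m + n).factorial := by
        have : m + 1 + n = (m + n) + 1 := by omega
        rw [this, Nat.factorial_succ]; push_cast; ring
      rw [F3, F4]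
      have hm : (0:ℝ) < (m.factorial : ℝ) := by exact_mod_cast m.factorial_pos
      have hmn : (0:ℝ) < ((m + n).factorial : ℝ) := by exact_mod_cast (m + n).factorial_pos
      simp only [Nat.factorial_one, Nat.factorial_zero, Nat.cast_one, pow_one, pow_zero]
      field_simp
      push_cast
      ring
    · rcases le_or_gt (2 * m) k with h3 | h3
      · -- k = 2m
        have hk : k = 2 * m := by omega
        subst hk
        rw [f_of_le (by omega), f_of_gt (by omega), f_of_gt (by omega), f_of_le (by omega)]
        have e1 : 2 * m + 2 - 2 * (m + 1) = 0 := by omega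
        have e4 : 2 * m - 2 * m = 0 := by omega
        rw [e1, e4]
        have F3 : ((m + 1).factorial : ℝ) = ((m:ℝ) + 1) * m.factorial := by
          rw [Nat.factorial_succ]; push_cast; ring
        have F4 : ((m + 1 + n).factorial : ℝ) = ((m:ℝ) + n + 1) * (m + n).factorial := by
          have : m + 1 + n = (m + n) + 1 := by omega
          rw [this, Nat.factorial_succ]; push_cast; ring
        rw [F3, F4]
        have hm : (0:ℝ) < (m.factorial : ℝ) := by exact_mod_cast m.factorial_pos
        have hmn : (0:ℝ) < ((m + n).factorial : ℝ) := by exact_mod_cast (m + n).factorial_pos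
        simp only [Nat.factorial_zero, Nat.cast_one, pow_zero]
        field_simp
        push_cast
        ring
      · -- k < 2m : everything vanishes
        rw [f_of_gt (by omega), f_of_gt (by omega), f_of_gt (by omega), f_of_gt (by omega)]
        ring

/-- Termwise certificate identity, `m = 0` case. -/
lemma cert_zero (n k : ℕ) :
    ((k : ℝ) + 2) * (2 * n + k + 2) * f n (k + 2) 0
      - 2 * (2 * n + 2 * k + 3) * f n (k + 1) 0
      = -4 * f n k 0 := by
  rw [f_of_le (by omega), f_of_le (by omega), f_of_le (by omega)]
  simp only [Nat.mul_zero, Nat.sub_zero, Nat.zero_add, Nat.factorial_zero, Nat.cast_one]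
  have F1 : ((k + 2).factorial : ℝ) = ((k:ℝ) + 2) * ((k:ℝ) + 1) * k.factorial := by
    rw [Nat.factorial_succ, Nat.factorial_succ]; push_cast; ring
  have F2 : ((k + 1).factorial : ℝ) = ((k:ℝ) + 1) * k.factorial := by
    rw [Nat.factorial_succ]; push_cast; ring
  rw [F1, F2]
  have P : (2:ℝ) ^ (k + 2) = 4 * 2 ^ k := by rw [pow_add]; ring
  have P1 : (2:ℝ) ^ (k + 1) = 2 * 2 ^ k := by rw [pow_add]; ring
  rw [P, P1]
  have hk : (0:ℝ) < (k.factorial : ℝ) := by exact_mod_cast k.factorial_pos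
  have hn : (0:ℝ) < (n.factorial : ℝ) := by exact_mod_cast n.factorial_pos
  field_simp
  ring

/-- The sum of the coefficients. -/
noncomputable def S (n k : ℕ) : ℝ := ∑ m ∈ range (k + 1), f n k m

/-- The closed form. -/
noncomputable def T (n k : ℕ) : ℝ :=
  ((2 * n + 2 * k).factorial : ℝ) /
    (k.factorial * (n + k).factorial * (2 * n + k).factorial)

lemma S_rec (n k : ℕ) :
    ((k : ℝ) + 2) * (2 * n + k + 2) * S n (k + 2)
      = 2 * (2 * n + 2 * k + 3) * S n (k + 1) := by
  have hS2 : S n (k + 2) = ∑ m ∈ range (k + 3), f n (k + 2) m := rfl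
  have hS1 : S n (k + 1) = ∑ m ∈ range (k + 3), f n (k + 1) m := by
    rw [S, sum_range_succ (f := fun m => f n (k + 1) m) (k + 2),
      f_of_gt (by omega), add_zero]
  rw [hS2, hS1, mul_sum, mul_sum, ← sub_eq_zero, ← sum_sub_distrib]
  have key : ∑ m ∈ range (k + 3),
      (((k : ℝ) + 2) * (2 * n + k + 2) * f n (k + 2) m
        - 2 * (2 * n + 2 * k + 3) * f n (k + 1) m)
      = ∑ m ∈ range (k + 2),
          (((k : ℝ) + 2) * (2 * n + k + 2) * f n (k + 2) (m + 1)
            - 2 * (2 * n + 2 * k + 3) * f n (k + 1) (m + 1))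
        + (((k : ℝ) + 2) * (2 * n + k + 2) * f n (k + 2) 0
            - 2 * (2 * n + 2 * k + 3) * f n (k + 1) 0) :=
    Finset.sum_range_succ' _ (k + 2)
  rw [key, cert_zero]
  have key2 : ∑ m ∈ range (k + 2),
      (((k : ℝ) + 2) * (2 * n + k + 2) * f n (k + 2) (m + 1)
        - 2 * (2 * n + 2 * k + 3) * f n (k + 1) (m + 1))
      = ∑ m ∈ range (k + 2), (-4 * f n k (m + 1) + 4 * f n k m) := by
    exact Finset.sum_congr rfl fun m _ => cert_succ n k m
  rw [key2]
  have tel : ∑ m ∈ range (k + 2), (-4 * f n k (m + 1) + 4 * f n k m)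
      = -4 * (f n k (k + 2) - f n k 0) := by
    have : ∀ m, -4 * f n k (m + 1) + 4 * f n k m = -4 * (f n k (m+1) - f n k m) := by
      intro m; ring
    rw [Finset.sum_congr rfl fun m _ => this m, ← Finset.mul_sum,
      Finset.sum_range_sub (fun m => f n k m)]
  rw [tel, f_of_gt (show k < 2 * (k + 2) by omega)]
  ring

lemma T_rec (n k : ℕ) :
    ((k : ℝ) + 2) * (2 * n + k + 2) * T n (k + 2)
      = 2 * (2 * n + 2 * k + 3) * T n (k + 1) := by
  unfold T
  have E1 : ((2 * n + 2 * (k + 2)).factorial : ℝ)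
      = (2 * (n:ℝ) + 2 * k + 4) * (2 * (n:ℝ) + 2 * k + 3) * ((2 * n + 2 * (k + 1)).factorial) := by
    have h : 2 * n + 2 * (k + 2) = ((2 * n + 2 * (k + 1)) + 1) + 1 := by omega
    rw [h, Nat.factorial_succ, Nat.factorial_succ]; push_cast; ring
  have E2 : (((k + 2)).factorial : ℝ) = ((k:ℝ) + 2) * ((k + 1).factorial) := by
    rw [Nat.factorial_succ]; push_cast; ring
  have E3 : ((n + (k + 2)).factorial : ℝ) = ((n:ℝ) + k + 2) * ((n + (k + 1)).factorial) := by
    have h : n + (k + 2) = (n + (k + 1)) + 1 := by omega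
    rw [h, Nat.factorial_succ]; push_cast; ring
  have E4 : ((2 * n + (k + 2)).factorial : ℝ)
      = (2 * (n:ℝ) + k + 2) * ((2 * n + (k + 1)).factorial) := by
    have h : 2 * n + (k + 2) = (2 * n + (k + 1)) + 1 := by omega
    rw [h, Nat.factorial_succ]; push_cast; ring
  rw [E1, E2, E3, E4]
  have h1 : (0:ℝ) < ((2 * n + 2 * (k + 1)).factorial : ℝ) := by exact_mod_cast Nat.factorial_pos _
  have h2 : (0:ℝ) < (((k + 1)).factorial : ℝ) := by exact_mod_cast Nat.factorial_pos _
  have h3 : (0:ℝ) < ((n + (k + 1)).factorial : ℝ) := by exact_mod_cast Nat.factorial_pos _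
  have h4 : (0:ℝ) < ((2 * n + (k + 1)).factorial : ℝ) := by exact_mod_cast Nat.factorial_pos _
  field_simp
  ring

lemma S_eq_T (n : ℕ) : ∀ k, S n k = T n k := by
  have base0 : S n 0 = T n 0 := by
    rw [S, T]
    simp only [Nat.zero_add, Finset.sum_range_one]
    rw [f_of_le (by omega)]
    have h1 : ((2 * n).factorial : ℝ) ≠ 0 := by
      exact_mod_cast (Nat.factorial_pos _).ne'
    have h2 : ((n).factorial : ℝ) ≠ 0 := by exact_mod_cast (Nat.factorial_pos _).ne'
    simp only [Nat.mul_zero, Nat.sub_zero, Nat.factorial_zero, Nat.zero_add, Nat.add_zero,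
      Nat.cast_one, pow_zero, one_mul, mul_one]
    field_simp
  have base1 : S n 1 = T n 1 := by
    rw [S, T]
    rw [Finset.sum_range_succ, Finset.sum_range_one, f_of_le (by omega), f_of_gt (by omega)]
    have e1 : 2 * n + 2 * 1 = (2 * n + 1) + 1 := by omega
    have e2 : n + 1 = n + 1 := rfl
    rw [e1, Nat.factorial_succ (2 * n + 1), Nat.factorial_succ n]
    have h1 : (0:ℝ) < ((2 * n + 1).factorial : ℝ) := by exact_mod_cast Nat.factorial_pos _
    have h2 : (0:ℝ) < (n.factorial : ℝ) := by exact_mod_cast Nat.factorial_pos _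
    simp only [Nat.mul_zero, Nat.sub_zero, Nat.factorial_zero, Nat.factorial_one, Nat.zero_add,
      add_zero, Nat.cast_one, pow_one]
    push_cast
    field_simp
    ring
  have step : ∀ k, S n (k + 1) = T n (k + 1) → S n (k + 2) = T n (k + 2) := by
    intro k h
    have c1 : ((k : ℝ) + 2) * (2 * n + k + 2) ≠ 0 := by positivity
    have := S_rec n k
    rw [h, ← T_rec n k] at this
    exact mul_left_cancel₀ c1 this
  have main : ∀ k, S n k = T n k ∧ S n (k + 1) = T n (k + 1) := by
    intro k
    induction k with
    | zero => exact ⟨base0, base1⟩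
    | succ k ih => exact ⟨ih.2, step k ih.2⟩
  exact fun k => (main k).1

lemma Gamma_nat_add_half (m : ℕ) :
    Real.Gamma ((m : ℝ) + 1 / 2)
      = Real.sqrt Real.pi * ((2 * m).factorial : ℝ) / (4 ^ m * (m.factorial : ℝ)) := by
  induction m with
  | zero => simpa using Real.Gamma_one_half_eq
  | succ m ih =>
    have h : ((m : ℝ) + 1) + 1 / 2 = ((m : ℝ) + 1 / 2) + 1 := by ring
    have hne : (m : ℝ) + 1 / 2 ≠ 0 := by positivity
    rw [show (((m + 1 : ℕ)) : ℝ) = (m : ℝ) + 1 by push_cast; ring, h,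
      Real.Gamma_add_one hne, ih]
    have e1 : 2 * (m + 1) = (2 * m + 1) + 1 := by omega
    rw [e1, Nat.factorial_succ, Nat.factorial_succ (2 * m), Nat.factorial_succ m]
    have h1 : (0:ℝ) < ((2 * m).factorial : ℝ) := by exact_mod_cast Nat.factorial_pos _
    have h2 : (0:ℝ) < (m.factorial : ℝ) := by exact_mod_cast Nat.factorial_pos _
    have h4 : (0:ℝ) < (4:ℝ) ^ m := by positivity
    rw [pow_succ]
    push_cast
    field_simp
    ring

lemma sum_range_two_mul (g : ℕ → ℝ) (N : ℕ) :
    ∑ j ∈ range (2 * N), g j = ∑ m ∈ range N, (g (2 * m) + g (2 * m + 1)) := by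
  induction N with
  | zero => simp
  | succ N ih =>
    have : 2 * (N + 1) = (2 * N + 1) + 1 := by omega
    rw [this, Finset.sum_range_succ, Finset.sum_range_succ, ih, Finset.sum_range_succ]
    ring

lemma sum_even_vanish (g : ℕ → ℝ) (hodd : ∀ j, ¬ Even j → g j = 0) (K : ℕ) :
    ∑ j ∈ range K, g j = ∑ m ∈ range K, (if 2 * m < K then g (2 * m) else 0) := by
  have h1 : ∑ j ∈ range K, (if j < K then g j else 0)
      = ∑ j ∈ range (2 * K), (if j < K then g j else 0) :=
    Finset.sum_subset (Finset.range_subset_range.2 (by omega))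
      (fun x _ hx' => if_neg (by simpa using hx'))
  have h0 : ∑ j ∈ range K, g j = ∑ j ∈ range K, (if j < K then g j else 0) :=
    Finset.sum_congr rfl fun j hj => (if_pos (Finset.mem_range.mp hj)).symm
  rw [h0, h1, sum_range_two_mul]
  refine Finset.sum_congr rfl fun m _ => ?_
  have hodd' : (if 2 * m + 1 < K then g (2 * m + 1) else 0) = 0 := by
    by_cases h : 2 * m + 1 < K
    · rw [if_pos h]; exact hodd _ (by simp [parity_simps])
    · rw [if_neg h]
  rw [hodd', add_zero]

end HKaux

open HKaux

open Real in
theorem heatKernel_series_representation (n : ℕ) (t : ℝ) (ht : 0 ≤ t) :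
    heatKernel t n = t ^ n * 4 ^ n / Real.sqrt π * Real.exp (-(4 * t)) *
      ∑' k : ℕ, (4 * t) ^ k / (k.factorial : ℝ) *
        (Real.Gamma ((n : ℝ) + 1 / 2 + k) / Real.Gamma (2 * (n : ℝ) + 1 + k)) := by
  classical
  -- the Bessel power series coefficients times t^i
  set u : ℕ → ℝ := fun i =>
    if Even i then t ^ i / ((i / 2).factorial * (i / 2 + n).factorial) else 0 with hu
  set g : ℕ → ℝ := fun j => (2 * t) ^ j / j.factorial with hg
  have hinj : Function.Injective (fun m : ℕ => 2 * m) := fun a b h => by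
    dsimp at h; omega
  have hu2m : ∀ m : ℕ, u (2 * m) = t ^ (2 * m) / (m.factorial * (m + n).factorial) := by
    intro m
    have : (2 * m) / 2 = m := by omega
    simp only [hu, if_pos (even_two_mul m), this]
  have hrange : ∀ x ∉ Set.range (fun m : ℕ => 2 * m), u x = 0 := by
    intro x hx
    have : ¬ Even x := by
      intro hev
      obtain ⟨r, hr⟩ := hev
      exact hx ⟨r, by dsimp; omega⟩
    simp only [hu, if_neg this]
  -- summability
  have hsum_base : Summable (fun m : ℕ => t ^ (2 * m) / (m.factorial * (m + n).factorial)) := by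
    refine Summable.of_nonneg_of_le (fun m => by positivity) (fun m => ?_)
      (Real.summable_pow_div_factorial (t ^ 2))
    rw [pow_mul]
    apply div_le_div_of_nonneg_left (by positivity) (by positivity)
    calc (m.factorial : ℝ) = m.factorial * 1 := by ring
    _ ≤ (m.factorial : ℝ) * (m + n).factorial := by
        apply mul_le_mul_of_nonneg_left _ (by positivity)
        exact_mod_cast (m + n).factorial_pos
  have hsum_u : Summable u := by
    rw [← Function.Injective.summable_iff hinj hrange]
    exact hsum_base.congr fun m => (hu2m m).symm
  have hA : (∑' i, u i) = ∑' m : ℕ, t ^ (2 * m) / (m.factorial * (m + n).factorial) := by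
    rw [← Function.Injective.tsum_eq hinj (f := u) ?_]
    · exact tsum_congr hu2m
    · intro x hx
      by_contra hxr
      exact hx (hrange x hxr)
  have hu_nonneg : ∀ i, 0 ≤ u i := by
    intro i
    simp only [hu]
    split
    · positivity
    · exact le_rfl
  have hg_nonneg : ∀ j, 0 ≤ g j := fun j => by simp only [hg]; positivity
  have hsum_g : Summable g := Real.summable_pow_div_factorial (2 * t)
  have hnorm_u : Summable fun i => ‖u i‖ := by
    refine hsum_u.congr fun i => ?_
    rw [Real.norm_of_nonneg (hu_nonneg i)]
  have hnorm_g : Summable fun j => ‖g j‖ := by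
    refine hsum_g.congr fun j => ?_
    rw [Real.norm_of_nonneg (hg_nonneg j)]
  -- Cauchy product
  have hcauchy : (∑' i, u i) * (∑' j, g j)
      = ∑' k : ℕ, ∑ p ∈ Finset.HasAntidiagonal.antidiagonal k, u p.1 * g p.2 :=
    tsum_mul_tsum_eq_tsum_sum_antidiagonal_of_summable_norm hnorm_u hnorm_g
  -- identify the k-th antidiagonal sum with t^k * S n k
  have hdiag : ∀ k : ℕ, ∑ p ∈ Finset.HasAntidiagonal.antidiagonal k, u p.1 * g p.2 = t ^ k * S n k := by
    intro k
    rw [Finset.Nat.sum_antidiagonal_eq_sum_range_succ (fun i j => u i * g j) k]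
    have hodd : ∀ j, ¬ Even j → u j * g (k - j) = 0 := by
      intro j hj
      simp only [hu, if_neg hj, zero_mul]
    rw [sum_even_vanish (fun j => u j * g (k - j)) hodd (k + 1)]
    rw [S, Finset.mul_sum]
    refine Finset.sum_congr rfl fun m hm => ?_
    by_cases h : 2 * m < k + 1
    · rw [if_pos h, hu2m m, f_of_le (by omega), hg]
      have hpow : (2 * t) ^ (k - 2 * m) = 2 ^ (k - 2 * m) * t ^ (k - 2 * m) := mul_pow 2 t _
      have htk : t ^ (2 * m) * t ^ (k - 2 * m) = t ^ k := by
        rw [← pow_add]; congr 1; omega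
      field_simp
      rw [hpow, ← htk]
      ring
    · rw [if_neg h, f_of_gt (by omega), mul_zero]
  -- the right-hand side Gamma computation
  have hGamma : ∀ k : ℕ,
      (4 * t) ^ k / (k.factorial : ℝ) *
          (Real.Gamma ((n : ℝ) + 1 / 2 + k) / Real.Gamma (2 * (n : ℝ) + 1 + k))
        = Real.sqrt π / 4 ^ n * (t ^ k * T n k) := by
    intro k
    have h1 : (n : ℝ) + 1 / 2 + k = ((n + k : ℕ) : ℝ) + 1 / 2 := by push_cast; ring
    have h2 : 2 * (n : ℝ) + 1 + k = ((2 * n + k : ℕ) : ℝ) + 1 := by push_cast; ring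
    rw [h1, h2, HKaux.Gamma_nat_add_half (n + k), Real.Gamma_nat_eq_factorial (2 * n + k)]
    rw [T]
    have e : 2 * (n + k) = 2 * n + 2 * k := by omega
    rw [e]
    have hfk : (0:ℝ) < (k.factorial : ℝ) := by exact_mod_cast Nat.factorial_pos _
    have hfnk : (0:ℝ) < ((n + k).factorial : ℝ) := by exact_mod_cast Nat.factorial_pos _
    have hf2nk : (0:ℝ) < ((2 * n + k).factorial : ℝ) := by exact_mod_cast Nat.factorial_pos _
    have h4 : (0:ℝ) < (4:ℝ) ^ (n + k) := by positivity
    have h4n : (0:ℝ) < (4:ℝ) ^ n := by positivity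
    have hmp : (4 * t) ^ k = 4 ^ k * t ^ k := mul_pow 4 t k
    rw [hmp, pow_add]
    field_simp
  -- main reductions
  have hbessel : besselI (n : ℤ) (2 * t)
      = t ^ n * ∑' m : ℕ, t ^ (2 * m) / (m.factorial * (m + n).factorial) := by
    rw [besselI, ← tsum_mul_left]
    refine tsum_congr fun m => ?_
    have hnat : ((n : ℤ)).natAbs = n := Int.natAbs_natCast n
    rw [hnat]
    have h2t : (2 * t) / 2 = t := by ring
    rw [h2t, pow_add]
    ring
  -- exp as a tsum
  have hexp : Real.exp (2 * t) = ∑' j, g j := by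
    rw [Real.exp_eq_exp_ℝ, NormedSpace.exp_eq_tsum_div]
  -- final RHS form
  have hRHS : t ^ n * 4 ^ n / Real.sqrt π * Real.exp (-(4 * t)) *
      (∑' k : ℕ, (4 * t) ^ k / (k.factorial : ℝ) *
        (Real.Gamma ((n : ℝ) + 1 / 2 + k) / Real.Gamma (2 * (n : ℝ) + 1 + k)))
      = t ^ n * Real.exp (-(4 * t)) * ∑' k : ℕ, t ^ k * T n k := by
    rw [tsum_congr hGamma, tsum_mul_left]
    have hsqrt : Real.sqrt π ≠ 0 := by
      have := Real.sqrt_pos.mpr Real.pi_pos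
      exact ne_of_gt this
    have h4n : ((4:ℝ) ^ n) ≠ 0 := by positivity
    field_simp
  rw [hRHS, heatKernel, hbessel, ← hA]
  have hkey : (∑' i, u i) * Real.exp (2 * t) = ∑' k : ℕ, t ^ k * T n k := by
    rw [hexp, hcauchy]
    exact tsum_congr fun k => by rw [hdiag k, S_eq_T]
  have hexp2 : Real.exp (-(2 * t)) = Real.exp (-(4 * t)) * Real.exp (2 * t) := by
    rw [← Real.exp_add]; ring_nf
  rw [hexp2, ← hkey]
  ring
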